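/- For an Artin algebra A, the Gorenstein stable category A-mod/A-Gproj (the quotient of A-mod by maps factoring through finitely generated Gorenstein-projective modules) is Karoubian, i.e., every idempotent morphism in it splits. -/

import Mathlib

open CategoryTheory CategoryTheory.Limits

def FGGorProj (A : Type) [Ring A] (M : ModuleCat.{0} A) : Prop :=
  Module.Finite A M ∧
  ∃ P : CochainComplex (ModuleCat.{0} A) ℤ,
    (∀ n : ℤ, Module.Finite A (P.X n) ∧ Projective (P.X n)) ∧
    (∀ n : ℤ, ∀ x : P.X n, P.d n (n + 1) x = 0 → ∃ y : P.X (n - 1), P.d (n - 1) n y = x) ∧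
    (∀ Q : ModuleCat.{0} A, Module.Finite A Q → Projective Q →
      ∀ n : ℤ, ∀ f : P.X n ⟶ Q, f.hom ∘ₗ (P.d (n - 1) n).hom = 0 →
        ∃ g : P.X (n + 1) ⟶ Q, g.hom ∘ₗ (P.d n (n + 1)).hom = f.hom) ∧
    Nonempty (M ≅ ModuleCat.of A (LinearMap.ker (P.d 0 1).hom))


/-- The category of finitely generated `A`-modules. -/
abbrev FGMod (A : Type) [Ring A] :=
  ObjectProperty.FullSubcategory (fun M : ModuleCat.{0} A => Module.Finite A M)

/-- Two maps are identified in the Gorenstein stable category when their difference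
factors through a finitely generated Gorenstein-projective module. -/
def stableRel (A : Type) [Ring A] : HomRel (FGMod A) :=
  fun {X Y} f g =>
    ∃ (G : ModuleCat.{0} A) (_ : FGGorProj A G) (u : X.obj ⟶ G) (v : G ⟶ Y.obj),
      (show X.obj ⟶ Y.obj from f.hom) = (show X.obj ⟶ Y.obj from g.hom) + u ≫ v

/-- The Gorenstein stable category `A-mod/A-Gproj`. -/
abbrev StMod (A : Type) [Ring A] := CategoryTheory.Quotient (stableRel A)

/-! ### Auxiliary material -/

noncomputable section AuxCplx
variable {A : Type} [Ring A]

/-- The zero cochain complex on `PUnit` modules. -/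
def zeroCplx (A : Type) [Ring A] : CochainComplex (ModuleCat.{0} A) ℤ where
  X _ := ModuleCat.of A PUnit
  d _ _ := 0
  shape := fun _ _ _ => rfl
  d_comp_d' := by intros; ext x

/-- linear equivalence from `PUnit` to any subsingleton module. -/
def punitEquiv {M : Type} [AddCommGroup M] [Module A M] [Subsingleton M] :
    PUnit ≃ₗ[A] M where
  toFun _ := 0
  invFun _ := 0
  map_add' := by intros; simp
  map_smul' := by intros; simp
  left_inv _ := Subsingleton.elim _ _
  right_inv _ := Subsingleton.elim _ _

lemma fggp_punit : FGGorProj A (ModuleCat.of A PUnit) := by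
  haveI hs : ∀ n : ℤ, Subsingleton ↑((zeroCplx A).X n) :=
    fun _ => inferInstanceAs (Subsingleton PUnit)
  refine ⟨inferInstance, zeroCplx A, ?_, ?_, ?_, ?_⟩
  · intro n
    constructor
    · exact inferInstanceAs (Module.Finite A PUnit)
    · exact (IsProjective.iff_projective (R := A) (P := PUnit)).mp inferInstance
  · exact fun n x _ => ⟨0, Subsingleton.elim _ _⟩
  · intro Q _ _ n f _
    refine ⟨0, ?_⟩
    ext x
    have : x = 0 := Subsingleton.elim _ _
    rw [this]
    simp
  · haveI : Subsingleton ↥(LinearMap.ker ((zeroCplx A).d 0 1).hom) :=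
      inferInstanceAs (Subsingleton
        ↥(LinearMap.ker ((0 : ModuleCat.of A PUnit ⟶ ModuleCat.of A PUnit).hom : PUnit →ₗ[A] PUnit)))
    exact ⟨LinearEquiv.toModuleIso (punitEquiv : PUnit ≃ₗ[A] _)⟩

/-- product of two cochain complexes of modules, by hand. -/
def prodCplx (P P' : CochainComplex (ModuleCat.{0} A) ℤ) : CochainComplex (ModuleCat.{0} A) ℤ where
  X n := ModuleCat.of A (P.X n × P'.X n)
  d i j := ModuleCat.ofHom (LinearMap.prodMap (P.d i j).hom (P'.d i j).hom)
  shape i j h := by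
    have h1 : P.d i j = 0 := P.shape i j h
    have h2 : P'.d i j = 0 := P'.shape i j h
    show ModuleCat.ofHom (LinearMap.prodMap (P.d i j).hom (P'.d i j).hom) = 0
    rw [h1, h2, ModuleCat.hom_zero, ModuleCat.hom_zero, LinearMap.prodMap_zero]
    rfl
  d_comp_d' i j k _ _ := by
    show ModuleCat.ofHom (LinearMap.prodMap (P.d i j).hom (P'.d i j).hom) ≫
      ModuleCat.ofHom (LinearMap.prodMap (P.d j k).hom (P'.d j k).hom) = 0
    have h1 : (P.d j k).hom ∘ₗ (P.d i j).hom = 0 := by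
      rw [← ModuleCat.hom_comp, P.d_comp_d i j k]; rfl
    have h2 : (P'.d j k).hom ∘ₗ (P'.d i j).hom = 0 := by
      rw [← ModuleCat.hom_comp, P'.d_comp_d i j k]; rfl
    rw [← ModuleCat.ofHom_comp, LinearMap.prodMap_comp, h1, h2, LinearMap.prodMap_zero]
    rfl

/-- the equivalence between a product of submodules and the prod submodule. -/
def prodSubEquiv {M N : Type} [AddCommGroup M] [AddCommGroup N] [Module A M] [Module A N]
    (p : Submodule A M) (q : Submodule A N) :
    (p × q) ≃ₗ[A] ↥(p.prod q) where
  toFun x := ⟨(x.1.1, x.2.1), ⟨x.1.2, x.2.2⟩⟩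
  invFun x := (⟨x.1.1, x.2.1⟩, ⟨x.1.2, x.2.2⟩)
  map_add' _ _ := rfl
  map_smul' _ _ := rfl
  left_inv _ := rfl
  right_inv _ := rfl

lemma fggp_prod {G G' : ModuleCat.{0} A} (h : FGGorProj A G) (h' : FGGorProj A G') :
    FGGorProj A (ModuleCat.of A (G × G')) := by
  obtain ⟨hfin, P, hProj, hExact, hLift, ⟨iso⟩⟩ := h
  obtain ⟨hfin', P', hProj', hExact', hLift', ⟨iso'⟩⟩ := h'
  refine ⟨?_, prodCplx P P', ?_, ?_, ?_, ?_⟩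
  · exact inferInstanceAs (Module.Finite A (↥G × ↥G'))
  · intro n
    haveI := (hProj n).1
    haveI := (hProj' n).1
    have p1 : Module.Projective A (P.X n) :=
      (IsProjective.iff_projective _).mpr (hProj n).2
    have p2 : Module.Projective A (P'.X n) :=
      (IsProjective.iff_projective _).mpr (hProj' n).2
    constructor
    · exact inferInstanceAs (Module.Finite A (↥(P.X n) × ↥(P'.X n)))
    · exact (IsProjective.iff_projective (R := A) (P := ↥(P.X n) × ↥(P'.X n))).mp inferInstance
  · intro n x hx
    have hx1 : P.d n (n+1) x.1 = 0 := congrArg Prod.fst hx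
    have hx2 : P'.d n (n+1) x.2 = 0 := congrArg Prod.snd hx
    obtain ⟨y1, hy1⟩ := hExact n x.1 hx1
    obtain ⟨y2, hy2⟩ := hExact' n x.2 hx2
    exact ⟨(y1, y2), Prod.ext hy1 hy2⟩
  · intro Q hQfin hQproj n f hf
    set f1 : P.X n ⟶ Q := ModuleCat.ofHom (f.hom ∘ₗ LinearMap.inl A (P.X n) (P'.X n)) with hf1def
    set f2 : P'.X n ⟶ Q := ModuleCat.ofHom (f.hom ∘ₗ LinearMap.inr A (P.X n) (P'.X n)) with hf2def
    obtain ⟨g1, hg1⟩ := hLift Q hQfin hQproj n f1 (by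
      ext x
      have h0 : f.hom (((prodCplx P P').d (n-1) n).hom ((x : P.X (n-1)), (0 : P'.X (n-1)))) = 0 :=
        LinearMap.congr_fun hf _
      have hd : ((prodCplx P P').d (n-1) n).hom ((x : P.X (n-1)), (0 : P'.X (n-1)))
          = ((P.d (n-1) n).hom x, 0) := by
        show LinearMap.prodMap _ _ _ = _
        simp
      rw [hd] at h0
      show f.hom ((P.d (n-1) n).hom x, 0) = (0 : ↥Q)
      exact h0)
    obtain ⟨g2, hg2⟩ := hLift' Q hQfin hQproj n f2 (by
      ext x
      have h0 : f.hom (((prodCplx P P').d (n-1) n).hom ((0 : P.X (n-1)), (x : P'.X (n-1)))) = 0 :=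
        LinearMap.congr_fun hf _
      have hd : ((prodCplx P P').d (n-1) n).hom ((0 : P.X (n-1)), (x : P'.X (n-1)))
          = (0, (P'.d (n-1) n).hom x) := by
        show LinearMap.prodMap _ _ _ = _
        simp
      rw [hd] at h0
      show f.hom (0, (P'.d (n-1) n).hom x) = (0 : ↥Q)
      exact h0)
    refine ⟨ModuleCat.ofHom (LinearMap.coprod g1.hom g2.hom), ?_⟩
    ext x
    change ↥(P.X n) × ↥(P'.X n) at x
    show LinearMap.coprod g1.hom g2.hom
      (LinearMap.prodMap (P.d n (n+1)).hom (P'.d n (n+1)).hom x) = f.hom x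
    have e1 : g1.hom ((P.d n (n+1)).hom x.1) = f1.hom x.1 := LinearMap.congr_fun hg1 x.1
    have e2 : g2.hom ((P'.d n (n+1)).hom x.2) = f2.hom x.2 := LinearMap.congr_fun hg2 x.2
    have hfx : f.hom x = f.hom (x.1, 0) + f.hom (0, x.2) := by
      refine Eq.trans ?_ (map_add f.hom ((x.1, 0) : (prodCplx P P').X n) (0, x.2))
      congr 1
      show x = (x.1 + 0, 0 + x.2)
      rw [add_zero, zero_add]
    rw [hfx]
    simp only [LinearMap.prodMap_apply, LinearMap.coprod_apply]
    rw [e1, e2]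
    rfl
  · refine ⟨LinearEquiv.toModuleIso ?_⟩
    have e1 : (G : Type) ≃ₗ[A] ↥(LinearMap.ker (P.d 0 1).hom) := iso.toLinearEquiv
    have e2 : (G' : Type) ≃ₗ[A] ↥(LinearMap.ker (P'.d 0 1).hom) := iso'.toLinearEquiv
    have hker : LinearMap.ker ((prodCplx P P').d 0 1).hom =
        (LinearMap.ker (P.d 0 1).hom).prod (LinearMap.ker (P'.d 0 1).hom) :=
      LinearMap.ker_prodMap _ _
    exact (e1.prodCongr e2).trans ((prodSubEquiv _ _).trans (LinearEquiv.ofEq _ _ hker.symm))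

end AuxCplx

/-! ### The stable relation is a congruence -/

section Congr
variable {A : Type} [Ring A]

lemma stableRel_congruence : Congruence (stableRel A) where
  equivalence := by
    intro X Y
    constructor
    · intro f
      exact ⟨ModuleCat.of A PUnit, fggp_punit, 0, 0, by simp⟩
    · rintro f g ⟨G, hG, u, v, huv⟩
      refine ⟨G, hG, u, -v, ?_⟩
      rw [huv, Preadditive.comp_neg]
      abel
    · rintro f g h ⟨G, hG, u, v, huv⟩ ⟨G', hG', u', v', huv'⟩
      refine ⟨ModuleCat.of A (G × G'), fggp_prod hG hG',
        (show X.obj ⟶ ModuleCat.of A (G × G') from ModuleCat.ofHom (LinearMap.prod u.hom u'.hom)),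
        (show ModuleCat.of A (G × G') ⟶ Y.obj from ModuleCat.ofHom (LinearMap.coprod v.hom v'.hom)), ?_⟩
      have hco : (show X.obj ⟶ ModuleCat.of A (G × G') from ModuleCat.ofHom (LinearMap.prod u.hom u'.hom)) ≫
          (show ModuleCat.of A (G × G') ⟶ Y.obj from ModuleCat.ofHom (LinearMap.coprod v.hom v'.hom))
          = u ≫ v + u' ≫ v' := by
        apply ModuleCat.hom_ext
        apply LinearMap.ext
        intro x
        show LinearMap.coprod v.hom v'.hom (LinearMap.prod u.hom u'.hom x) = ((v.hom : G →ₗ[A] Y.obj).comp u.hom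
          + (v'.hom : G' →ₗ[A] Y.obj).comp u'.hom) x
        simp
      rw [hco, huv, huv']
      abel
  comp_left := by
    rintro X Y Z w f g ⟨G, hG, u, v, huv⟩
    refine ⟨G, hG, (show X.obj ⟶ Y.obj from w.hom) ≫ u, v, ?_⟩
    show (show X.obj ⟶ Y.obj from w.hom) ≫ (show Y.obj ⟶ Z.obj from f.hom) = _
    rw [huv, Preadditive.comp_add, Category.assoc]
    rfl
  comp_right := by
    rintro X Y Z f g w ⟨G, hG, u, v, huv⟩
    refine ⟨G, hG, u, v ≫ (show Y.obj ⟶ Z.obj from w.hom), ?_⟩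
    show (show X.obj ⟶ Y.obj from f.hom) ≫ (show Y.obj ⟶ Z.obj from w.hom) = _
    rw [huv, Preadditive.add_comp, Category.assoc]
    rfl

end Congr
/-- Lifting idempotents modulo a nilpotent element, by Newton iteration. -/
lemma lift_idem_nil {C : Type*} [CommRing C] :
    ∀ (m : ℕ) (g : C), (g * g - g) ^ m = 0 →
      ∃ e : C, e * e = e ∧ e - g ∈ Ideal.span {g * g - g} := by
  intro m
  induction m with
  | zero =>
    intro g h
    rw [pow_zero] at h
    haveI := subsingleton_of_zero_eq_one h.symm
    exact ⟨g, Subsingleton.elim _ _, by rw [Subsingleton.elim (g - g) 0]; exact Ideal.zero_mem _⟩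
  | succ m ih =>
    intro g h
    rcases Nat.eq_zero_or_pos m with rfl | hm
    · rw [pow_one] at h
      refine ⟨g, ?_, by rw [sub_self]; exact Ideal.zero_mem _⟩
      rw [← sub_eq_zero]; exact h
    · set a := g * g - g with ha
      set g' := 3 * (g * g) - 2 * (g * g * g) with hg'
      have key : g' * g' - g' = a * a * (4 * a - 3) := by rw [ha, hg']; ring
      have hdiff : g' - g = a * (1 - 2 * g) := by rw [ha, hg']; ring
      have hnil : (g' * g' - g') ^ m = 0 := by
        rw [key, mul_pow, mul_pow]
        have h1 : a ^ m * a ^ m = a ^ (m + m) := (pow_add a m m).symm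
        have h2 : a ^ (m + m) = 0 := by
          have h3 : m + m = (m + 1) + (m - 1) := by omega
          rw [h3, pow_add, h, zero_mul]
        rw [h1, h2, zero_mul]
      obtain ⟨e, hee, hmem⟩ := ih g' hnil
      refine ⟨e, hee, ?_⟩
      have h1 : e - g = (e - g') + (g' - g) := by ring
      rw [h1]
      refine Ideal.add_mem _ ?_ ?_
      · have hle : Ideal.span {g' * g' - g'} ≤ Ideal.span {a} := by
          rw [Ideal.span_singleton_le_span_singleton, key]
          exact ⟨a * (4 * a - 3), by ring⟩
        exact hle hmem
      · rw [hdiff]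
        exact Ideal.mem_span_singleton'.mpr ⟨1 - 2 * g, by ring⟩

/-- In a commutative artinian ring, idempotents can be corrected modulo `g*g - g`. -/
lemma exists_idem_artinian {C : Type*} [CommRing C] [IsArtinianRing C] (g : C) :
    ∃ e : C, e * e = e ∧ e - g ∈ Ideal.span {g * g - g} := by
  set t := g * g - g with ht
  clear_value t
  obtain ⟨n, c, hc⟩ := IsArtinian.exists_pow_succ_smul_dvd t (1 : C)
  rw [smul_eq_mul, smul_eq_mul, mul_one, Nat.succ_eq_add_one] at hc
  -- hc : t ^ (n + 1) * c = t ^ n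
  have hstep : ∀ j : ℕ, t ^ (n + 1 + j) = c * t ^ (n + 1 + (j + 1)) := by
    intro j
    calc t ^ (n + 1 + j)
        = t ^ n * t ^ (j + 1) := by
          have hj : n + 1 + j = n + (j + 1) := by omega
          rw [hj, pow_add]
      _ = t ^ (n + 1) * c * t ^ (j + 1) := by rw [hc]
      _ = c * (t ^ (n + 1) * t ^ (j + 1)) := by ring
      _ = c * t ^ (n + 1 + (j + 1)) := by rw [← pow_add]
  have key : ∀ k : ℕ, t ^ (n + 1) = c ^ k * t ^ (n + 1 + k) := by
    intro k
    induction k with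
    | zero => simp
    | succ k ihk =>
      calc t ^ (n + 1) = c ^ k * t ^ (n + 1 + k) := ihk
        _ = c ^ k * (c * t ^ (n + 1 + (k + 1))) := by rw [← hstep k]
        _ = c ^ (k + 1) * t ^ (n + 1 + (k + 1)) := by rw [pow_succ]; ring
  set s := c ^ (n + 1) * t ^ (n + 1) with hs
  clear_value s
  have hst : s * t ^ (n + 1) = t ^ (n + 1) := by
    calc s * t ^ (n + 1) = c ^ (n+1) * t ^ (n+1) * t ^ (n+1) := by rw [hs]
      _ = c ^ (n+1) * t ^ ((n+1) + (n+1)) := by rw [pow_add]; ring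
      _ = t ^ (n + 1) := (key (n + 1)).symm
  have hss : s * s = s := by
    calc s * s = c ^ (n+1) * (s * t ^ (n+1)) := by rw [hs]; ring
      _ = c ^ (n+1) * t ^ (n+1) := by rw [hst]
      _ = s := hs.symm
  have h1s : (1 - s) * (1 - s) = 1 - s := by
    have h2 : (1 - s) * (1 - s) = 1 - 2 * s + s * s := by ring
    rw [h2, hss]; ring
  set h := g * (1 - s) with hh
  clear_value h
  have hha : h * h - h = t * (1 - s) := by
    rw [hh]
    calc g * (1 - s) * (g * (1 - s)) - g * (1 - s)
        = g * g * ((1 - s) * (1 - s)) - g * (1 - s) := by ring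
      _ = (g * g - g) * (1 - s) := by rw [h1s]; try ring
      _ = t * (1 - s) := by rw [← ht]
  have hnil : (h * h - h) ^ (n + 1) = 0 := by
    rw [hha, mul_pow]
    have hz : t ^ (n + 1) * (1 - s) = 0 := by
      rw [mul_sub, mul_one, mul_comm (t ^ (n+1)) s, hst]
      ring
    calc t ^ (n+1) * (1 - s) ^ (n+1)
        = (t ^ (n+1) * (1 - s)) * (1 - s) ^ n := by rw [pow_succ]; ring
      _ = 0 := by rw [hz, zero_mul]
  obtain ⟨e, hee, hmem⟩ := lift_idem_nil (n + 1) h hnil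
  refine ⟨e, hee, ?_⟩
  have hsplit : e - g = (e - h) + (h - g) := by ring
  rw [hsplit]
  refine Ideal.add_mem _ ?_ ?_
  · have hle : Ideal.span {h * h - h} ≤ Ideal.span {t} := by
      rw [Ideal.span_singleton_le_span_singleton, hha]
      exact ⟨1 - s, rfl⟩
    exact hle hmem
  · rw [hh]
    refine Ideal.mem_span_singleton'.mpr ⟨-(g * (c ^ (n+1) * t ^ n)), ?_⟩
    calc -(g * (c ^ (n+1) * t ^ n)) * t = -(g * (c ^ (n+1) * (t ^ n * t))) := by ring
      _ = -(g * (c ^ (n+1) * t ^ (n+1))) := by rw [← pow_succ]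
      _ = g * (1 - s) - g := by rw [← hs]; ring

/-- Idempotent lifting in an algebra that is artinian as a module. -/
lemma lift_idem_end (R : Type) [CommRing R] [IsArtinianRing R] (S : Type) [Ring S]
    [Algebra R S] (hart : IsArtinian R S) (f : S) :
    ∃ e d : S, e * e = e ∧ e = f + d * (f * f - f) := by
  set C := Algebra.adjoin R ({f} : Set S) with hC
  haveI : IsArtinian R ↥C :=
    isArtinian_of_injective (Subalgebra.toSubmodule C).subtype Subtype.val_injective
  haveI : IsArtinianRing ↥C := isArtinian_of_tower R inferInstance
  set fC : ↥C := ⟨f, Algebra.self_mem_adjoin_singleton R f⟩ with hfC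
  obtain ⟨eC, hee, hmem⟩ := exists_idem_artinian fC
  obtain ⟨dC, hd⟩ := Ideal.mem_span_singleton'.mp hmem
  refine ⟨(eC : S), (dC : S), ?_, ?_⟩
  · exact_mod_cast congrArg Subtype.val hee
  · have h2 : (dC : S) * ((f : S) * f - f) = (eC : S) - f := by
      have h3 := congrArg Subtype.val hd
      push_cast at h3
      exact h3
    rw [h2]
    abel

lemma isArtinian_end (R A M : Type) [CommRing R] [IsArtinianRing R] [Ring A] [Algebra R A]
    [AddCommGroup M] [Module A M] [Module R M] [IsScalarTower R A M] [SMulCommClass A R M]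
    [Module.Finite R M] : IsArtinian R (Module.End A M) := by
  obtain ⟨n, gv, hgv⟩ := Module.Finite.exists_fin (R := R) (M := M)
  let Φ : Module.End A M →ₗ[R] (Fin n → M) :=
    { toFun := fun φ => fun i => φ (gv i)
      map_add' := fun φ ψ => rfl
      map_smul' := fun r φ => rfl }
  have hinj : Function.Injective Φ := by
    intro φ ψ hφψ
    have h0 : ∀ i, φ (gv i) = ψ (gv i) := fun i => congrFun hφψ i
    have hker : Submodule.span R (Set.range gv) ≤
        LinearMap.ker ((φ - ψ).restrictScalars R) := by
      rw [Submodule.span_le]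
      rintro _ ⟨i, rfl⟩
      simp only [SetLike.mem_coe, LinearMap.mem_ker, LinearMap.restrictScalars_apply,
        LinearMap.sub_apply, h0 i, sub_self]
    rw [hgv] at hker
    have hz : (φ - ψ).restrictScalars R = 0 := by
      apply LinearMap.ext
      intro x
      exact hker (Submodule.mem_top) 
    have : φ - ψ = 0 := by
      apply LinearMap.ext
      intro x
      exact congrFun (congrArg DFunLike.coe hz) x
    exact sub_eq_zero.mp this
  exact isArtinian_of_injective Φ hinj

/-- For an Artin algebra `A`, the Gorenstein stable category
`A-mod/A-Gproj` is Karoubian: every idempotent splits. -/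
theorem stable_category_idempotentComplete (R : Type) [CommRing R] [IsArtinianRing R]
    (A : Type) [Ring A] [Algebra R A] [Module.Finite R A] :
    IsIdempotentComplete (StMod A) := by
  haveI : Congruence (stableRel A) := stableRel_congruence
  constructor
  rintro ⟨X⟩ p hp
  obtain ⟨f, hf⟩ := (Quotient.functor (stableRel A)).map_surjective p
  have hrel : stableRel A (f ≫ f) f := by
    rw [← Quotient.functor_map_eq_iff (stableRel A)]
    rw [Functor.map_comp, hf]
    exact hp
  obtain ⟨G, hG, u, v, huv⟩ := hrel
  haveI hMfin : Module.Finite A ↥X.obj := X.property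
  letI : Module R ↥X.obj := Module.compHom _ (algebraMap R A)
  haveI : IsScalarTower R A ↥X.obj := ⟨fun r a x => by
    show (r • a) • x = (algebraMap R A r) • (a • x)
    rw [Algebra.smul_def, mul_smul]⟩
  haveI : SMulCommClass A R ↥X.obj := ⟨fun a r x => by
    show a • ((algebraMap R A r) • x) = (algebraMap R A r) • (a • x)
    rw [← mul_smul, ← Algebra.commutes r a, mul_smul]⟩
  haveI : Module.Finite R ↥X.obj := Module.Finite.trans A ↥X.obj
  haveI hart : IsArtinian R (Module.End A ↥X.obj) := isArtinian_end R A ↥X.obj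
  obtain ⟨e, d, hee, hed⟩ :=
    lift_idem_end R (Module.End A ↥X.obj) hart (f.hom.hom : Module.End A ↥X.obj)
  have h1 : (f.hom.hom : ↥X.obj →ₗ[A] ↥X.obj) ∘ₗ f.hom.hom
      = (f.hom.hom : ↥X.obj →ₗ[A] ↥X.obj) + (v.hom : G →ₗ[A] ↥X.obj) ∘ₗ (u.hom : ↥X.obj →ₗ[A] G) := congrArg ModuleCat.Hom.hom huv
  have ht : (f.hom.hom : ↥X.obj →ₗ[A] ↥X.obj) ∘ₗ f.hom.hom - f.hom.hom
      = (v.hom : G →ₗ[A] ↥X.obj) ∘ₗ (u.hom : ↥X.obj →ₗ[A] G) := by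
    rw [h1]
    abel
  have hrel2 : stableRel A (show X ⟶ X from ObjectProperty.homMk (ModuleCat.ofHom e)) f := by
    refine ⟨G, hG, u, v ≫ (show X.obj ⟶ X.obj from ModuleCat.ofHom (d : ↥X.obj →ₗ[A] ↥X.obj)), ?_⟩
    apply ModuleCat.hom_ext
    show (e : ↥X.obj →ₗ[A] ↥X.obj)
      = (f.hom.hom : ↥X.obj →ₗ[A] ↥X.obj) + ((d : ↥X.obj →ₗ[A] ↥X.obj)
          ∘ₗ (v.hom : G →ₗ[A] ↥X.obj)) ∘ₗ (u.hom : ↥X.obj →ₗ[A] G)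
    rw [hed]
    congr 1
    show (d : ↥X.obj →ₗ[A] ↥X.obj) ∘ₗ ((f.hom.hom : ↥X.obj →ₗ[A] ↥X.obj) ∘ₗ f.hom.hom - f.hom.hom)
      = ((d : ↥X.obj →ₗ[A] ↥X.obj) ∘ₗ (v.hom : G →ₗ[A] ↥X.obj)) ∘ₗ (u.hom : ↥X.obj →ₗ[A] G)
    rw [ht]
    rfl
  have hpe : (Quotient.functor (stableRel A)).map (show X ⟶ X from ObjectProperty.homMk (ModuleCat.ofHom e)) = p := by
    rw [← hf]
    exact (Quotient.functor_map_eq_iff (stableRel A) _ _).mpr hrel2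
  haveI hNfin : Module.Finite A ↥(LinearMap.range (e : ↥X.obj →ₗ[A] ↥X.obj)) :=
    Module.Finite.range _
  refine ⟨(Quotient.functor (stableRel A)).obj
      ⟨ModuleCat.of A ↥(LinearMap.range (e : ↥X.obj →ₗ[A] ↥X.obj)), hNfin⟩,
    (Quotient.functor (stableRel A)).map
      (show (⟨ModuleCat.of A ↥(LinearMap.range (e : ↥X.obj →ₗ[A] ↥X.obj)), hNfin⟩ : FGMod A) ⟶ X
        from ObjectProperty.homMk (ModuleCat.ofHom (LinearMap.range (e : ↥X.obj →ₗ[A] ↥X.obj)).subtype)),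
    (Quotient.functor (stableRel A)).map
      (show X ⟶ (⟨ModuleCat.of A ↥(LinearMap.range (e : ↥X.obj →ₗ[A] ↥X.obj)), hNfin⟩ : FGMod A)
        from ObjectProperty.homMk (ModuleCat.ofHom (e : ↥X.obj →ₗ[A] ↥X.obj).rangeRestrict)), ?_, ?_⟩
  · rw [← Functor.map_comp]
    have hir : (show (⟨ModuleCat.of A ↥(LinearMap.range (e : ↥X.obj →ₗ[A] ↥X.obj)), hNfin⟩ :
          FGMod A) ⟶ X from ObjectProperty.homMk (ModuleCat.ofHom (LinearMap.range (e : ↥X.obj →ₗ[A] ↥X.obj)).subtype)) ≫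
        (show X ⟶ (⟨ModuleCat.of A ↥(LinearMap.range (e : ↥X.obj →ₗ[A] ↥X.obj)), hNfin⟩ : FGMod A)
          from ObjectProperty.homMk (ModuleCat.ofHom (e : ↥X.obj →ₗ[A] ↥X.obj).rangeRestrict)) = 𝟙 _ := by
      apply ObjectProperty.hom_ext
      apply ModuleCat.hom_ext
      apply LinearMap.ext
      rintro ⟨y, hy⟩
      obtain ⟨x, rfl⟩ := hy
      apply Subtype.ext
      show (e : ↥X.obj →ₗ[A] ↥X.obj) ((e : ↥X.obj →ₗ[A] ↥X.obj) x)
        = (e : ↥X.obj →ₗ[A] ↥X.obj) x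
      exact LinearMap.congr_fun hee x
    rw [hir]
    exact (Quotient.functor (stableRel A)).map_id _
  · rw [← Functor.map_comp]
    have hri : (show X ⟶ (⟨ModuleCat.of A ↥(LinearMap.range (e : ↥X.obj →ₗ[A] ↥X.obj)), hNfin⟩ :
          FGMod A) from ObjectProperty.homMk (ModuleCat.ofHom (e : ↥X.obj →ₗ[A] ↥X.obj).rangeRestrict)) ≫
        (show (⟨ModuleCat.of A ↥(LinearMap.range (e : ↥X.obj →ₗ[A] ↥X.obj)), hNfin⟩ : FGMod A) ⟶ X
          from ObjectProperty.homMk (ModuleCat.ofHom (LinearMap.range (e : ↥X.obj →ₗ[A] ↥X.obj)).subtype))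
        = (show X ⟶ X from ObjectProperty.homMk (ModuleCat.ofHom e)) := by
      apply ObjectProperty.hom_ext
      apply ModuleCat.hom_ext
      apply LinearMap.ext
      intro x
      rfl
    rw [hri, hpe]
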